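/- Let P, Q be homogeneous polynomials in 𝐑 = R[x][y_{i,j} : i=1..n, j≥0], where P has multi-degree (D_1,…,D_n) (total degree D_i in the group of variables y_{i,0}, y_{i,1}, …) and only involves y_{i,j} with j ≤ S_i, and similarly Q with (E_1,…,E_n) and (T_1,…,T_n). Then h(PQ) ≤ min{ Σ_i h(C(D_i+S_i, D_i)), Σ_i h(C(E_i+T_i, E_i)) } + h(min{deg_x(P), deg_x(Q)}) + h(P) + h(Q), where h of a polynomial is the maximum height of its R-coefficients. Moreover, if P or Q consists of a single monomial in the y-variables times an element of R[x], the first term can be dropped. -/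

import Mathlib

open Polynomial

/-- A height function on an integral domain `R`. -/
structure HeightFn (R : Type*) [CommRing R] where
  h : R → ℝ
  h_zero : h 0 = 0
  h_nonneg : ∀ a, 0 ≤ h a
  h_neg : ∀ a, h (-a) = h a
  h_mul : ∀ a b, h (a * b) ≤ h a + h b
  h_sum : ∀ (n : ℕ) (f : Fin n → R) (B : ℝ), 0 ≤ B → (∀ i, h (f i) ≤ B) →
    h (∑ i, f i) ≤ h ((n - 1 : ℕ) : R) + B

namespace HeightFn

variable {R : Type*} [CommRing R] (H : HeightFn R)

/-- Height of a natural number, viewed inside `R`. -/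
def hN (n : ℕ) : ℝ := H.h (n : R)

/-- Height of a polynomial: the maximum height of its coefficients. -/
def hp (p : R[X]) : ℝ := p.support.fold max 0 fun i => H.h (p.coeff i)

end HeightFn

open Polynomial

namespace DFinite

variable {R : Type*} [CommRing R] {n : ℕ}

/-- The ring `𝐑 = R[x][y_{i,j} : i = 1..n, j ≥ 0]`. -/
abbrev MvR (R : Type*) [CommRing R] (n : ℕ) := MvPolynomial (Fin n × ℕ) (Polynomial R)

/-- The `x`-degree of an element of `𝐑`. -/
noncomputable def degx (P : MvR R n) : ℕ := P.support.sup fun m => (MvPolynomial.coeff m P).natDegree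

/-- The height (with respect to a height function on `R`) of an element of `𝐑`:
the maximum height of all elements of `R` appearing as coefficients. -/
noncomputable def mvHeight (H : HeightFn R) (P : MvR R n) : ℝ :=
  P.support.fold max 0 fun m => H.hp (MvPolynomial.coeff m P)

/-- The total degree of a monomial in the `i`-th group `y_{i,0}, y_{i,1}, …` of
variables. -/
def gdeg (i : Fin n) (m : (Fin n × ℕ) →₀ ℕ) : ℕ := m.sum fun v e => if v.1 = i then e else 0

/-- `P` is homogeneous of multi-degree `Dv`, i.e. homogeneous of degree `Dv i` with
respect to each group `y_{i,0}, y_{i,1}, …` of variables. -/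
def GHomog (P : MvR R n) (Dv : Fin n → ℕ) : Prop :=
  ∀ m ∈ P.support, ∀ i, gdeg i m = Dv i

end DFinite


namespace HeightFn

variable {R : Type*} [CommRing R] (H : HeightFn R)

lemma hN_nonneg (n : ℕ) : 0 ≤ H.hN n := H.h_nonneg _

lemma h_sum_fintype {ι : Type*} [Fintype ι] (f : ι → R) (B : ℝ) (hB : 0 ≤ B)
    (hf : ∀ i, H.h (f i) ≤ B) :
    H.h (∑ i, f i) ≤ H.hN (Fintype.card ι - 1) + B := by
  rw [← Equiv.sum_comp (Fintype.equivFin ι).symm f]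
  exact H.h_sum _ _ B hB fun i => hf _

lemma h_sum_le_of_injOn {ι κ : Type*} [Fintype κ] [DecidableEq κ] (s : Finset ι) (f : ι → R)
    (B : ℝ) (hB : 0 ≤ B) (hf : ∀ a ∈ s, H.h (f a) ≤ B)
    (g : ι → κ) (hg : Set.InjOn g s) :
    H.h (∑ a ∈ s, f a) ≤ H.hN (Fintype.card κ - 1) + B := by
  rw [← Finset.sum_fiberwise_of_maps_to (fun a _ => Finset.mem_univ (g a)) f]
  refine H.h_sum_fintype _ B hB fun k => ?_
  by_cases hk : (s.filter (fun a => g a = k)).Nonempty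
  · obtain ⟨a, ha⟩ := hk
    have ha' := Finset.mem_filter.mp ha
    have hone : s.filter (fun a => g a = k) = {a} := by
      ext b
      simp only [Finset.mem_singleton, Finset.mem_filter]
      constructor
      · rintro ⟨hb, hbk⟩
        exact hg hb ha'.1 (hbk.trans ha'.2.symm)
      · rintro rfl; exact ha'
    rw [hone, Finset.sum_singleton]
    exact hf a ha'.1
  · rw [Finset.not_nonempty_iff_eq_empty.mp hk, Finset.sum_empty, H.h_zero]
    exact hB

lemma h_sum_pi : ∀ (m : ℕ) (τ : Fin m → Type) (_ : ∀ i, Fintype (τ i))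
    (f : ((i : Fin m) → τ i) → R) (B : ℝ), 0 ≤ B → (∀ t, H.h (f t) ≤ B) →
    H.h (∑ t, f t) ≤ (∑ i, H.hN (Fintype.card (τ i) - 1)) + B := by
  intro m
  induction m with
  | zero =>
    intro τ _ f B hB hf
    simpa using hf default
  | succ m ih =>
    intro τ _ f B hB hf
    rw [← Equiv.sum_comp (Fin.consEquiv τ) f, Fintype.sum_prod_type]
    have hB' : 0 ≤ (∑ i : Fin m, H.hN (Fintype.card (τ i.succ) - 1)) + B :=
      add_nonneg (Finset.sum_nonneg fun i _ => H.hN_nonneg _) hB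
    have main := H.h_sum_fintype (fun x : τ 0 => ∑ t, f ((Fin.consEquiv τ) (x, t))) _ hB'
      (fun x => ih (fun i => τ i.succ) (fun _ => inferInstance)
        (fun t => f ((Fin.consEquiv τ) (x, t))) B hB (fun t => hf _))
    refine main.trans_eq ?_
    rw [Fin.sum_univ_succ]
    ring

lemma h_sum_le_of_injOn_pi {ι : Type*} {m : ℕ} (τ : Fin m → Type) [inst : ∀ i, Fintype (τ i)]
    {κ : Type*} [Fintype κ] [DecidableEq κ]
    (s : Finset ι) (f : ι → R) (B : ℝ) (hB : 0 ≤ B) (hf : ∀ a ∈ s, H.h (f a) ≤ B)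
    (g : ι → ((i : Fin m) → τ i) × κ) (hg : Set.InjOn g s) :
    H.h (∑ a ∈ s, f a) ≤
      (∑ i, H.hN (Fintype.card (τ i) - 1)) + H.hN (Fintype.card κ - 1) + B := by
  classical
  rw [← Finset.sum_fiberwise_of_maps_to (fun a _ => Finset.mem_univ ((g a).1)) f]
  rw [add_assoc]
  refine H.h_sum_pi m τ inst _ _ (add_nonneg (H.hN_nonneg _) hB) fun t => ?_
  refine H.h_sum_le_of_injOn _ f B hB (fun a ha => hf a (Finset.mem_filter.mp ha).1)
    (fun a => (g a).2) ?_
  intro a ha b hb hab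
  have ha' := Finset.mem_filter.mp ha
  have hb' := Finset.mem_filter.mp hb
  exact hg ha'.1 hb'.1 (Prod.ext (ha'.2.trans hb'.2.symm) hab)

lemma hp_nonneg (p : R[X]) : 0 ≤ H.hp p := (Finset.le_fold_max 0).mpr (Or.inl le_rfl)

lemma hp_le {p : R[X]} {B : ℝ} (hB : 0 ≤ B) (hc : ∀ k, H.h (p.coeff k) ≤ B) : H.hp p ≤ B :=
  (Finset.fold_max_le B).mpr ⟨hB, fun k _ => hc k⟩

lemma h_coeff_le_hp (p : R[X]) (k : ℕ) : H.h (p.coeff k) ≤ H.hp p := by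
  by_cases hk : k ∈ p.support
  · exact (Finset.le_fold_max _).mpr (Or.inr ⟨k, hk, le_rfl⟩)
  · rw [Polynomial.notMem_support_iff.mp hk, H.h_zero]; exact H.hp_nonneg p

end HeightFn

namespace DFinite

variable {R : Type*} [CommRing R] {n : ℕ}


def msOf (Sv : Fin n → ℕ) (i : Fin n) (m1 : (Fin n × ℕ) →₀ ℕ) : Multiset (Fin (Sv i + 1)) :=
  ∑ j : Fin (Sv i + 1), Multiset.replicate (m1 (i, (j : ℕ))) j

lemma count_msOf (Sv : Fin n → ℕ) (i : Fin n) (m1 : (Fin n × ℕ) →₀ ℕ) (c : Fin (Sv i + 1)) :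
    (msOf Sv i m1).count c = m1 (i, (c : ℕ)) := by
  classical
  simp [msOf, Multiset.count_sum', Multiset.count_replicate]

lemma card_msOf (Sv : Fin n → ℕ) (i : Fin n) (m1 : (Fin n × ℕ) →₀ ℕ) :
    Multiset.card (msOf Sv i m1) = ∑ j : Fin (Sv i + 1), m1 (i, (j : ℕ)) := by
  simp [msOf]

lemma sum_fin_eq_gdeg (Sv : Fin n → ℕ) (i : Fin n) (m1 : (Fin n × ℕ) →₀ ℕ)
    (hS : ∀ v ∈ m1.support, v.2 ≤ Sv v.1) :
    ∑ j : Fin (Sv i + 1), m1 (i, (j : ℕ)) = gdeg i m1 := by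
  classical
  have hinj : ∀ a ∈ Finset.univ, ∀ b ∈ Finset.univ,
      (fun j : Fin (Sv i + 1) => ((i, (j : ℕ)) : Fin n × ℕ)) a =
      (fun j : Fin (Sv i + 1) => ((i, (j : ℕ)) : Fin n × ℕ)) b → a = b := by
    intro a _ b _ hab
    exact Fin.ext (by simpa using hab)
  have himg : ∑ j : Fin (Sv i + 1), m1 (i, (j : ℕ)) =
      ∑ v ∈ Finset.univ.image (fun j : Fin (Sv i + 1) => ((i, (j : ℕ)) : Fin n × ℕ)), m1 v :=
    (Finset.sum_image hinj).symm
  rw [himg, gdeg, Finsupp.sum, ← Finset.sum_filter]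
  refine (Finset.sum_subset ?_ ?_).symm
  · intro v hv
    have hv' := Finset.mem_filter.mp hv
    have hle : v.2 ≤ Sv i := hv'.2 ▸ hS v hv'.1
    refine Finset.mem_image.mpr ⟨⟨v.2, by omega⟩, Finset.mem_univ _, ?_⟩
    simp [← hv'.2]
  · intro v hv hvn
    have hv1 : v.1 = i := by
      obtain ⟨j, _, hj⟩ := Finset.mem_image.mp hv
      rw [← hj]
    by_contra hne
    exact hvn (Finset.mem_filter.mpr ⟨Finsupp.mem_support_iff.mpr hne, hv1⟩)

def symOf (Sv Dv : Fin n → ℕ) (i : Fin n) (m1 : (Fin n × ℕ) →₀ ℕ) :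
    Sym (Fin (Sv i + 1)) (Dv i) :=
  if h : Multiset.card (msOf Sv i m1) = Dv i then ⟨msOf Sv i m1, h⟩
  else Sym.replicate (Dv i) ⟨0, Nat.succ_pos _⟩

lemma symOf_inj (Sv Dv : Fin n → ℕ) (m1 m2 : (Fin n × ℕ) →₀ ℕ)
    (h1 : ∀ v ∈ m1.support, v.2 ≤ Sv v.1) (h2 : ∀ v ∈ m2.support, v.2 ≤ Sv v.1)
    (hd1 : ∀ i, gdeg i m1 = Dv i) (hd2 : ∀ i, gdeg i m2 = Dv i)
    (heq : ∀ i, symOf Sv Dv i m1 = symOf Sv Dv i m2) : m1 = m2 := by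
  have hc1 : ∀ i, Multiset.card (msOf Sv i m1) = Dv i := fun i => by
    rw [card_msOf, sum_fin_eq_gdeg Sv i m1 h1, hd1]
  have hc2 : ∀ i, Multiset.card (msOf Sv i m2) = Dv i := fun i => by
    rw [card_msOf, sum_fin_eq_gdeg Sv i m2 h2, hd2]
  have hms : ∀ i, msOf Sv i m1 = msOf Sv i m2 := by
    intro i
    have h := heq i
    have e1 : symOf Sv Dv i m1 = ⟨msOf Sv i m1, hc1 i⟩ := dif_pos (hc1 i)
    have e2 : symOf Sv Dv i m2 = ⟨msOf Sv i m2, hc2 i⟩ := dif_pos (hc2 i)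
    rw [e1, e2] at h
    exact congrArg Subtype.val h
  ext v
  obtain ⟨i, j⟩ := v
  by_cases hj : j ≤ Sv i
  · have := congrArg (Multiset.count (⟨j, by omega⟩ : Fin (Sv i + 1))) (hms i)
    rwa [count_msOf, count_msOf] at this
  · have e1 : m1 (i, j) = 0 := by
      by_contra hne
      exact hj (h1 (i, j) (Finsupp.mem_support_iff.mpr hne))
    have e2 : m2 (i, j) = 0 := by
      by_contra hne
      exact hj (h2 (i, j) (Finsupp.mem_support_iff.mpr hne))
    rw [e1, e2]


lemma mvHeight_nonneg (H : HeightFn R) (P : MvR R n) : 0 ≤ mvHeight H P :=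
  (Finset.le_fold_max 0).mpr (Or.inl le_rfl)

lemma mvHeight_le {H : HeightFn R} {P : MvR R n} {B : ℝ} (hB : 0 ≤ B)
    (hc : ∀ m k, H.h ((MvPolynomial.coeff m P).coeff k) ≤ B) : mvHeight H P ≤ B :=
  (Finset.fold_max_le B).mpr ⟨hB, fun m _ => H.hp_le hB (hc m)⟩

lemma h_coeff_le_mvHeight (H : HeightFn R) (P : MvR R n) (m : (Fin n × ℕ) →₀ ℕ) (k : ℕ) :
    H.h ((MvPolynomial.coeff m P).coeff k) ≤ mvHeight H P := by
  by_cases hm : m ∈ P.support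
  · exact (H.h_coeff_le_hp _ k).trans ((Finset.le_fold_max _).mpr (Or.inr ⟨m, hm, le_rfl⟩))
  · rw [MvPolynomial.notMem_support_iff.mp hm, Polynomial.coeff_zero, H.h_zero]
    exact mvHeight_nonneg H P

lemma coeff_coeff_mul (P Q : MvR R n) (m : (Fin n × ℕ) →₀ ℕ) (k : ℕ)
    [∀ z : (((Fin n × ℕ) →₀ ℕ) × ((Fin n × ℕ) →₀ ℕ)) × ℕ × ℕ,
      Decidable ((MvPolynomial.coeff z.1.1 P).coeff z.2.1 *
        (MvPolynomial.coeff z.1.2 Q).coeff z.2.2 ≠ 0)] :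
    (MvPolynomial.coeff m (P * Q)).coeff k =
      ∑ z ∈ (Finset.HasAntidiagonal.antidiagonal m ×ˢ Finset.HasAntidiagonal.antidiagonal k).filter
        (fun z => (MvPolynomial.coeff z.1.1 P).coeff z.2.1 *
                  (MvPolynomial.coeff z.1.2 Q).coeff z.2.2 ≠ 0),
        (MvPolynomial.coeff z.1.1 P).coeff z.2.1 * (MvPolynomial.coeff z.1.2 Q).coeff z.2.2 := by
  rw [Finset.sum_filter_ne_zero, Finset.sum_product, MvPolynomial.coeff_mul,
    Polynomial.finset_sum_coeff]
  simp_rw [Polynomial.coeff_mul]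

lemma key (H : HeightFn R) (P Q : MvR R n) (Dv Sv : Fin n → ℕ)
    (hPhom : GHomog P Dv)
    (hPS : ∀ m ∈ P.support, ∀ v ∈ m.support, v.2 ≤ Sv v.1)
    (m : (Fin n × ℕ) →₀ ℕ) (k : ℕ) :
    H.h ((MvPolynomial.coeff m (P * Q)).coeff k) ≤
      (∑ i, H.hN ((Dv i + Sv i).choose (Dv i))) + H.hN (min (degx P) (degx Q)) +
        (mvHeight H P + mvHeight H Q) := by
  classical
  set dm := min (degx P) (degx Q) with hdm
  set s := (Finset.HasAntidiagonal.antidiagonal m ×ˢ Finset.HasAntidiagonal.antidiagonal k).filter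
      (fun z => (MvPolynomial.coeff z.1.1 P).coeff z.2.1 *
                (MvPolynomial.coeff z.1.2 Q).coeff z.2.2 ≠ 0) with hs
  set B := mvHeight H P + mvHeight H Q with hB
  have hBnn : 0 ≤ B := add_nonneg (mvHeight_nonneg _ _) (mvHeight_nonneg _ _)
  have hfacts : ∀ z ∈ s, z.1.1 ∈ P.support ∧ z.1.2 ∈ Q.support ∧ z.2.1 ≤ degx P ∧
      z.2.2 ≤ degx Q ∧ z.1.1 + z.1.2 = m ∧ z.2.1 + z.2.2 = k := by
    intro z hz
    rw [hs, Finset.mem_filter, Finset.mem_product] at hz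
    obtain ⟨⟨h1, h2⟩, hne⟩ := hz
    have hP0 : (MvPolynomial.coeff z.1.1 P).coeff z.2.1 ≠ 0 := left_ne_zero_of_mul hne
    have hQ0 : (MvPolynomial.coeff z.1.2 Q).coeff z.2.2 ≠ 0 := right_ne_zero_of_mul hne
    have hPm : z.1.1 ∈ P.support := MvPolynomial.mem_support_iff.mpr
      (fun h => hP0 (by rw [h, Polynomial.coeff_zero]))
    have hQm : z.1.2 ∈ Q.support := MvPolynomial.mem_support_iff.mpr
      (fun h => hQ0 (by rw [h, Polynomial.coeff_zero]))
    exact ⟨hPm, hQm,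
      (Polynomial.le_natDegree_of_ne_zero hP0).trans
        (Finset.le_sup (f := fun w => (MvPolynomial.coeff w P).natDegree) hPm),
      (Polynomial.le_natDegree_of_ne_zero hQ0).trans
        (Finset.le_sup (f := fun w => (MvPolynomial.coeff w Q).natDegree) hQm),
      Finset.HasAntidiagonal.mem_antidiagonal.mp h1, Finset.HasAntidiagonal.mem_antidiagonal.mp h2⟩
  have hbound : ∀ z ∈ s, H.h ((MvPolynomial.coeff z.1.1 P).coeff z.2.1 *
      (MvPolynomial.coeff z.1.2 Q).coeff z.2.2) ≤ B := fun z _ =>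
    (H.h_mul _ _).trans (add_le_add (h_coeff_le_mvHeight H P _ _) (h_coeff_le_mvHeight H Q _ _))
  set g : (((Fin n × ℕ) →₀ ℕ) × ((Fin n × ℕ) →₀ ℕ)) × ℕ × ℕ →
      ((i : Fin n) → Option (Sym (Fin (Sv i + 1)) (Dv i))) × Fin (dm + 1) :=
    fun z => (fun i => some (symOf Sv Dv i z.1.1),
      ⟨min (if degx P ≤ degx Q then z.2.1 else z.2.2) dm, by omega⟩) with hg
  have hinj : Set.InjOn g s := by
    intro z hz z' hz' hzz
    obtain ⟨hP1, hQ1, hj1, hl1, hm1, hk1⟩ := hfacts z hz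
    obtain ⟨hP2, hQ2, hj2, hl2, hm2, hk2⟩ := hfacts z' hz'
    have hsym : ∀ i, symOf Sv Dv i z.1.1 = symOf Sv Dv i z'.1.1 := fun i =>
      Option.some_injective _ (congrFun (congrArg Prod.fst hzz) i)
    have e1 : z.1.1 = z'.1.1 := symOf_inj Sv Dv _ _ (hPS _ hP1) (hPS _ hP2)
      (hPhom _ hP1) (hPhom _ hP2) hsym
    have e2 : z.1.2 = z'.1.2 := by
      have : z.1.1 + z.1.2 = z.1.1 + z'.1.2 := by rw [hm1]; rw [e1, hm2]
      exact add_left_cancel this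
    have hfin : min (if degx P ≤ degx Q then z.2.1 else z.2.2) dm =
        min (if degx P ≤ degx Q then z'.2.1 else z'.2.2) dm :=
      congrArg (fun w => ((w.2 : Fin (dm + 1)) : ℕ)) hzz
    have e34 : z.2.1 = z'.2.1 ∧ z.2.2 = z'.2.2 := by
      by_cases hle : degx P ≤ degx Q
      · rw [if_pos hle, if_pos hle] at hfin
        have hdmP : dm = degx P := min_eq_left hle
        omega
      · rw [if_neg hle, if_neg hle] at hfin
        have hdmQ : dm = degx Q := min_eq_right (by omega)
        omega
    have : z = ((z.1.1, z.1.2), (z.2.1, z.2.2)) := rfl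
    rw [this, e1, e2, e34.1, e34.2]
  rw [coeff_coeff_mul, ← hs]
  have main := HeightFn.h_sum_le_of_injOn_pi H
    (fun i : Fin n => Option (Sym (Fin (Sv i + 1)) (Dv i))) s _ B hBnn hbound g hinj
  refine main.trans_eq ?_
  congr 2
  · refine Finset.sum_congr rfl fun i _ => ?_
    congr 1
    rw [Fintype.card_option, Sym.card_sym_eq_multichoose, Nat.multichoose_eq, Fintype.card_fin]
    have h1 : Sv i + 1 + Dv i - 1 = Dv i + Sv i := by omega
    rw [h1]
    omega
  · congr 1
    rw [Fintype.card_fin]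
    omega

lemma key2 (H : HeightFn R) (P Q : MvR R n) (hc : P.support.card ≤ 1)
    (m : (Fin n × ℕ) →₀ ℕ) (k : ℕ) :
    H.h ((MvPolynomial.coeff m (P * Q)).coeff k) ≤
      H.hN (min (degx P) (degx Q)) + (mvHeight H P + mvHeight H Q) := by
  classical
  set dm := min (degx P) (degx Q) with hdm
  set s := (Finset.HasAntidiagonal.antidiagonal m ×ˢ Finset.HasAntidiagonal.antidiagonal k).filter
      (fun z => (MvPolynomial.coeff z.1.1 P).coeff z.2.1 *
                (MvPolynomial.coeff z.1.2 Q).coeff z.2.2 ≠ 0) with hs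
  set B := mvHeight H P + mvHeight H Q with hB
  have hBnn : 0 ≤ B := add_nonneg (mvHeight_nonneg _ _) (mvHeight_nonneg _ _)
  have hfacts : ∀ z ∈ s, z.1.1 ∈ P.support ∧ z.1.2 ∈ Q.support ∧ z.2.1 ≤ degx P ∧
      z.2.2 ≤ degx Q ∧ z.1.1 + z.1.2 = m ∧ z.2.1 + z.2.2 = k := by
    intro z hz
    rw [hs, Finset.mem_filter, Finset.mem_product] at hz
    obtain ⟨⟨h1, h2⟩, hne⟩ := hz
    have hP0 : (MvPolynomial.coeff z.1.1 P).coeff z.2.1 ≠ 0 := left_ne_zero_of_mul hne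
    have hQ0 : (MvPolynomial.coeff z.1.2 Q).coeff z.2.2 ≠ 0 := right_ne_zero_of_mul hne
    have hPm : z.1.1 ∈ P.support := MvPolynomial.mem_support_iff.mpr
      (fun h => hP0 (by rw [h, Polynomial.coeff_zero]))
    have hQm : z.1.2 ∈ Q.support := MvPolynomial.mem_support_iff.mpr
      (fun h => hQ0 (by rw [h, Polynomial.coeff_zero]))
    exact ⟨hPm, hQm,
      (Polynomial.le_natDegree_of_ne_zero hP0).trans
        (Finset.le_sup (f := fun w => (MvPolynomial.coeff w P).natDegree) hPm),
      (Polynomial.le_natDegree_of_ne_zero hQ0).trans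
        (Finset.le_sup (f := fun w => (MvPolynomial.coeff w Q).natDegree) hQm),
      Finset.HasAntidiagonal.mem_antidiagonal.mp h1, Finset.HasAntidiagonal.mem_antidiagonal.mp h2⟩
  have hbound : ∀ z ∈ s, H.h ((MvPolynomial.coeff z.1.1 P).coeff z.2.1 *
      (MvPolynomial.coeff z.1.2 Q).coeff z.2.2) ≤ B := fun z _ =>
    (H.h_mul _ _).trans (add_le_add (h_coeff_le_mvHeight H P _ _) (h_coeff_le_mvHeight H Q _ _))
  set g : (((Fin n × ℕ) →₀ ℕ) × ((Fin n × ℕ) →₀ ℕ)) × ℕ × ℕ → Fin (dm + 1) :=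
    fun z => ⟨min (if degx P ≤ degx Q then z.2.1 else z.2.2) dm, by omega⟩ with hg
  have hinj : Set.InjOn g s := by
    intro z hz z' hz' hzz
    obtain ⟨hP1, hQ1, hj1, hl1, hm1, hk1⟩ := hfacts z hz
    obtain ⟨hP2, hQ2, hj2, hl2, hm2, hk2⟩ := hfacts z' hz'
    have e1 : z.1.1 = z'.1.1 := Finset.card_le_one.mp hc _ hP1 _ hP2
    have e2 : z.1.2 = z'.1.2 := by
      have : z.1.1 + z.1.2 = z.1.1 + z'.1.2 := by rw [hm1]; rw [e1, hm2]
      exact add_left_cancel this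
    have hfin : min (if degx P ≤ degx Q then z.2.1 else z.2.2) dm =
        min (if degx P ≤ degx Q then z'.2.1 else z'.2.2) dm :=
      congrArg (fun w : Fin (dm + 1) => (w : ℕ)) hzz
    have e34 : z.2.1 = z'.2.1 ∧ z.2.2 = z'.2.2 := by
      by_cases hle : degx P ≤ degx Q
      · rw [if_pos hle, if_pos hle] at hfin
        have hdmP : dm = degx P := min_eq_left hle
        omega
      · rw [if_neg hle, if_neg hle] at hfin
        have hdmQ : dm = degx Q := min_eq_right (by omega)
        omega
    have : z = ((z.1.1, z.1.2), (z.2.1, z.2.2)) := rfl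
    rw [this, e1, e2, e34.1, e34.2]
  rw [coeff_coeff_mul, ← hs]
  have main := HeightFn.h_sum_le_of_injOn H s _ B hBnn hbound g hinj
  refine main.trans_eq ?_
  congr 2
  rw [Fintype.card_fin]
  omega

end DFinite
open DFinite in
/-- height of a product of homogeneous polynomials in
`𝐑 = R[x][y_{i,j}]`.  If `P` has multi-degree `(D_1,…,D_n)` and only involves
`y_{i,j}` with `j ≤ S_i`, and `Q` has multi-degree `(E_1,…,E_n)` with `j ≤ T_i`,
then `h(PQ)` is bounded as stated; the binomial term can be dropped when `P` or `Q`
is a single monomial times an element of `R[x]`. -/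
theorem mv_height_mul {R : Type*} [CommRing R] [IsDomain R] (H : HeightFn R) {n : ℕ}
    (P Q : MvR R n) (Dv Sv Ev Tv : Fin n → ℕ)
    (hPhom : GHomog P Dv) (hQhom : GHomog Q Ev)
    (hPS : ∀ m ∈ P.support, ∀ v ∈ m.support, v.2 ≤ Sv v.1)
    (hQT : ∀ m ∈ Q.support, ∀ v ∈ m.support, v.2 ≤ Tv v.1) :
    mvHeight H (P * Q) ≤
        min (∑ i, H.hN ((Dv i + Sv i).choose (Dv i)))
            (∑ i, H.hN ((Ev i + Tv i).choose (Ev i))) +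
          H.hN (min (degx P) (degx Q)) + mvHeight H P + mvHeight H Q ∧
    ((P.support.card ≤ 1 ∨ Q.support.card ≤ 1) →
      mvHeight H (P * Q) ≤
        H.hN (min (degx P) (degx Q)) + mvHeight H P + mvHeight H Q) := by
  have hS1 : 0 ≤ ∑ i, H.hN ((Dv i + Sv i).choose (Dv i)) :=
    Finset.sum_nonneg fun i _ => H.hN_nonneg _
  have hS2 : 0 ≤ ∑ i, H.hN ((Ev i + Tv i).choose (Ev i)) :=
    Finset.sum_nonneg fun i _ => H.hN_nonneg _
  have hmP := mvHeight_nonneg H P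
  have hmQ := mvHeight_nonneg H Q
  have hNd := H.hN_nonneg (min (degx P) (degx Q))
  constructor
  · refine mvHeight_le ?_ fun m k => ?_
    · have := le_min hS1 hS2
      linarith
    · have b1 := key H P Q Dv Sv hPhom hPS m k
      have b2 := key H Q P Ev Tv hQhom hQT m k
      rw [mul_comm Q P, min_comm (degx Q) (degx P)] at b2
      rcases le_total (∑ i, H.hN ((Dv i + Sv i).choose (Dv i)))
          (∑ i, H.hN ((Ev i + Tv i).choose (Ev i))) with hle | hle
      · rw [min_eq_left hle]; linarith
      · rw [min_eq_right hle]; linarith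
  · intro hcase
    refine mvHeight_le (by linarith) fun m k => ?_
    rcases hcase with hc | hc
    · have := key2 H P Q hc m k
      linarith
    · have := key2 H Q P hc m k
      rw [mul_comm Q P, min_comm (degx Q) (degx P)] at this
      linarith
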